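/- Let S be a species tree on n ≥ 1 leaves and let 𝒢₁, 𝒢₂ ∈ 𝖦^S be two reconciled gene trees with exactly one gene per species. Then d_path(𝒢₁, 𝒢₂) ≤ H(S). -/

import Mathlib

open SimpleGraph

attribute [local instance] Classical.propDecidable

/-- A rooted tree: a finite connected acyclic graph with a distinguished root. -/
structure RTree (V : Type*) [Fintype V] where
  adj : SimpleGraph V
  isTree : adj.IsTree
  root : V

variable {V : Type*} [Fintype V]

/-- `Anc T a b` : `a` is an ancestor of `b` (i.e. `b ⪯ a`), expressed as:
`a` lies on the (unique) path from the root to `b`. -/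
def Anc (T : RTree V) (a b : V) : Prop :=
  T.adj.dist T.root b = T.adj.dist T.root a + T.adj.dist a b

/-- `IsChild T c p` : `c` is a child of `p`. -/
def IsChild (T : RTree V) (c p : V) : Prop :=
  T.adj.Adj c p ∧ Anc T p c

/-- The set of children of `v`. -/
def childSet (T : RTree V) (v : V) : Set V := {c | IsChild T c v}

/-- A leaf is a node with no children. -/
def IsLeaf (T : RTree V) (v : V) : Prop := ∀ c, ¬ IsChild T c v

/-- The clade of `v`: the set of leaves descending from `v`. -/
def clade (T : RTree V) (v : V) : Set V := {x | IsLeaf T x ∧ Anc T v x}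

/-- `w` is the lowest common ancestor of the set `X` in `T`. -/
def IsLCA (T : RTree V) (X : Set V) (w : V) : Prop :=
  (∀ x ∈ X, Anc T w x) ∧ ∀ w', (∀ x ∈ X, Anc T w' x) → Anc T w' w

/-- A species tree is a rooted binary tree: every internal node has exactly two children. -/
def IsSpeciesTree (S : RTree V) : Prop :=
  ∀ v, ¬ IsLeaf S v → (childSet S v).ncard = 2

/-- Number of leaves of a rooted tree. -/
noncomputable def numLeaves (T : RTree V) : ℕ := {v | IsLeaf T v}.ncard

/-- `Hsum S` = `H(S)`: the sum of root-to-internal-node distances in `S`. -/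
noncomputable def Hsum (S : RTree V) : ℕ :=
  ∑ v : V, if IsLeaf S v then 0 else S.adj.dist S.root v

inductive Evt | dup | spec | extant
deriving DecidableEq


section TreeBasics

variable {T : RTree V}

/-- depth of a vertex -/
noncomputable def dep (T : RTree V) (v : V) : ℕ := T.adj.dist T.root v

lemma RTree.conn (T : RTree V) : T.adj.Connected := T.isTree.isConnected

lemma anc_iff {a b : V} : Anc T a b ↔ dep T b = dep T a + T.adj.dist a b := Iff.rfl

lemma anc_refl (a : V) : Anc T a a := by
  simp [Anc, SimpleGraph.dist_self]

lemma anc_root (a : V) : Anc T T.root a := by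
  simp [Anc, SimpleGraph.dist_self]

lemma anc_trans {a b c : V} (hab : Anc T a b) (hbc : Anc T b c) : Anc T a c := by
  have h1 := T.conn.dist_triangle (u := T.root) (v := a) (w := c)
  have h2 := T.conn.dist_triangle (u := a) (v := b) (w := c)
  unfold Anc at *
  omega

lemma tdist_eq_zero {a b : V} (h : T.adj.dist a b = 0) : a = b :=
  (T.conn.dist_eq_zero_iff).mp h

lemma anc_antisymm {a b : V} (hab : Anc T a b) (hba : Anc T b a) : a = b := by
  have hc : T.adj.dist a b = T.adj.dist b a := SimpleGraph.dist_comm (G := T.adj)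
  unfold Anc at *
  exact tdist_eq_zero (T := T) (by omega)

lemma anc_dep_le {a b : V} (hab : Anc T a b) : dep T a ≤ dep T b := by
  unfold Anc at hab; unfold dep; omega

lemma IsChild.dist_one {c v : V} (h : IsChild T c v) : T.adj.dist v c = 1 :=
  SimpleGraph.dist_eq_one_iff_adj.mpr h.1.symm

lemma IsChild.dep_eq {c v : V} (h : IsChild T c v) : dep T c = dep T v + 1 := by
  have h2 := h.2
  unfold Anc at h2
  rw [h.dist_one] at h2
  exact h2

/-- On a geodesic walk, takeUntil and dropUntil are geodesics. -/
lemma geodesic_take_drop {u v a : V} (p : T.adj.Walk u v) (hp : p.length = T.adj.dist u v)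
    (ha : a ∈ p.support) :
    (p.takeUntil a ha).length = T.adj.dist u a ∧
    (p.dropUntil a ha).length = T.adj.dist a v := by
  have h1 : T.adj.dist u a ≤ (p.takeUntil a ha).length := SimpleGraph.dist_le _
  have h2 : T.adj.dist a v ≤ (p.dropUntil a ha).length := SimpleGraph.dist_le _
  have h3 : (p.takeUntil a ha).length + (p.dropUntil a ha).length = p.length := by
    rw [← SimpleGraph.Walk.length_append, SimpleGraph.Walk.take_spec]
  have h4 := T.conn.dist_triangle (u := u) (v := a) (w := v)
  omega

lemma dist_add_of_mem_geodesic {u v a : V} (p : T.adj.Walk u v)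
    (hp : p.length = T.adj.dist u v) (ha : a ∈ p.support) :
    T.adj.dist u a + T.adj.dist a v = T.adj.dist u v := by
  obtain ⟨h1, h2⟩ := geodesic_take_drop p hp ha
  have h3 : (p.takeUntil a ha).length + (p.dropUntil a ha).length = p.length := by
    rw [← SimpleGraph.Walk.length_append, SimpleGraph.Walk.take_spec]
  omega

/-- Any ancestor of `c` lies on any geodesic from the root to `c`. -/
lemma mem_geodesic_of_anc {a c : V} (hac : Anc T a c) (p : T.adj.Walk T.root c)
    (hp : p.length = T.adj.dist T.root c) : a ∈ p.support := by
  obtain ⟨q1, hq1⟩ := T.conn.exists_walk_length_eq_dist T.root a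
  obtain ⟨q2, hq2⟩ := T.conn.exists_walk_length_eq_dist a c
  have hw : (q1.append q2).length = T.adj.dist T.root c := by
    rw [SimpleGraph.Walk.length_append, hq1, hq2]; exact hac.symm
  have hwp : (q1.append q2).IsPath := SimpleGraph.Walk.isPath_of_length_eq_dist _ hw
  have hpp : p.IsPath := SimpleGraph.Walk.isPath_of_length_eq_dist _ hp
  have huniq := T.isTree.existsUnique_path T.root c
  have : p = q1.append q2 := (huniq.unique hpp hwp)
  rw [this, SimpleGraph.Walk.mem_support_append_iff]
  exact Or.inl (SimpleGraph.Walk.end_mem_support q1)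

/-- Two ancestors of a common vertex with equal depths coincide. -/
lemma anc_eq_of_dep_eq {a b c : V} (hac : Anc T a c) (hbc : Anc T b c)
    (hd : dep T a = dep T b) : a = b := by
  obtain ⟨p, hp⟩ := T.conn.exists_walk_length_eq_dist T.root c
  have hamem := mem_geodesic_of_anc hac p hp
  have hbmem := mem_geodesic_of_anc hbc p hp
  obtain ⟨hta, hda⟩ := geodesic_take_drop p hp hamem
  have hsplit : b ∈ (p.takeUntil a hamem).support ∨ b ∈ (p.dropUntil a hamem).support := by
    rw [← SimpleGraph.Walk.mem_support_append_iff, SimpleGraph.Walk.take_spec]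
    exact hbmem
  rcases hsplit with hb | hb
  · have := dist_add_of_mem_geodesic (T := T) _ hta hb
    have hba : T.adj.dist b a = 0 := by unfold dep at *; omega
    exact (tdist_eq_zero hba).symm
  · have := dist_add_of_mem_geodesic (T := T) _ hda hb
    have hab : T.adj.dist a b = 0 := by unfold Anc dep at *; omega
    exact tdist_eq_zero hab

/-- Two ancestors of a common vertex are comparable. -/
lemma anc_of_anc_anc {a b c : V} (hac : Anc T a c) (hbc : Anc T b c)
    (hd : dep T a ≤ dep T b) : Anc T a b := by
  obtain ⟨p, hp⟩ := T.conn.exists_walk_length_eq_dist T.root c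
  have hamem := mem_geodesic_of_anc hac p hp
  have hbmem := mem_geodesic_of_anc hbc p hp
  obtain ⟨hta, hda⟩ := geodesic_take_drop p hp hamem
  have hsplit : b ∈ (p.takeUntil a hamem).support ∨ b ∈ (p.dropUntil a hamem).support := by
    rw [← SimpleGraph.Walk.mem_support_append_iff, SimpleGraph.Walk.take_spec]
    exact hbmem
  rcases hsplit with hb | hb
  · have := dist_add_of_mem_geodesic (T := T) _ hta hb
    have hba : T.adj.dist b a = 0 := by unfold dep at *; omega
    have : b = a := tdist_eq_zero hba
    rw [this]; exact anc_refl _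
  · have h5 := dist_add_of_mem_geodesic (T := T) _ hda hb
    unfold Anc dep at *; omega

/-- If `v` is a strict ancestor of `x` then some child of `v` is an ancestor of `x`. -/
lemma child_step {v x : V} (hvx : Anc T v x) (hne : v ≠ x) :
    ∃ c, IsChild T c v ∧ Anc T c x := by
  have hdvx : T.adj.dist v x ≠ 0 := fun h => hne (tdist_eq_zero h)
  obtain ⟨w, hw⟩ := T.conn.exists_walk_length_eq_dist v x
  cases w with
  | nil => simp at hw; exact absurd rfl hne
  | cons h w' =>
    rename_i c
    have hlen : w'.length + 1 = T.adj.dist v x := by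
      simpa [Nat.add_comm] using hw
    have hcx : T.adj.dist c x ≤ w'.length := SimpleGraph.dist_le _
    have hvc1 : T.adj.dist v c = 1 := SimpleGraph.dist_eq_one_iff_adj.mpr h
    have htr1 := T.conn.dist_triangle (u := v) (v := c) (w := x)
    have hcx' : T.adj.dist c x = T.adj.dist v x - 1 := by omega
    have htr2 := T.conn.dist_triangle (u := T.root) (v := v) (w := c)
    have htr3 := T.conn.dist_triangle (u := T.root) (v := c) (w := x)
    have hvc : T.adj.dist T.root c = T.adj.dist T.root v + 1 := by
      unfold Anc at hvx; omega
    refine ⟨c, ⟨h.symm, ?_⟩, ?_⟩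
    · unfold Anc; omega
    · unfold Anc at *; omega

/-- Existence of an ancestor at any prescribed depth. -/
lemma exists_anc_at_dep {w : V} {k : ℕ} (hk : k ≤ dep T w) :
    ∃ x, Anc T x w ∧ dep T x = k := by
  induction k with
  | zero => exact ⟨T.root, anc_root w, by simp [dep, SimpleGraph.dist_self]⟩
  | succ n ih =>
    obtain ⟨x, hxw, hxd⟩ := ih (Nat.le_of_succ_le hk)
    have hne : x ≠ w := by
      intro hxeq; subst hxeq; omega
    obtain ⟨c, hc, hcw⟩ := child_step hxw hne
    exact ⟨c, hcw, by rw [hc.dep_eq, hxd]⟩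

/-- Every vertex has a leaf descendant. -/
lemma exists_leaf_desc (v : V) : ∃ x, IsLeaf T x ∧ Anc T v x := by
  classical
  obtain ⟨x, hxmem, hxmax⟩ :=
    Finset.exists_max_image (Finset.univ.filter (fun y => Anc T v y)) (dep T)
      ⟨v, by simp [anc_refl]⟩
  refine ⟨x, ?_, (Finset.mem_filter.mp hxmem).2⟩
  intro c hc
  have hvc : Anc T v c := anc_trans (Finset.mem_filter.mp hxmem).2 hc.2
  have := hxmax c (by simp [hvc])
  rw [hc.dep_eq] at this
  omega

end TreeBasics

section Laminar
variable {γ : Type*} [DecidableEq γ]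

/-- Maximal members of a finite family of finite sets. -/
def MaxSet (F : Finset (Finset γ)) : Finset (Finset γ) :=
  F.filter (fun A => ∀ B ∈ F, A ⊆ B → B = A)

lemma exists_maxset {F : Finset (Finset γ)} {A : Finset γ} (hA : A ∈ F) :
    ∃ M, M ∈ MaxSet F ∧ A ⊆ M := by
  obtain ⟨M, hM, hMmax⟩ := Finset.exists_max_image (F.filter (fun B => A ⊆ B))
    Finset.card ⟨A, by simp [hA]⟩
  rw [Finset.mem_filter] at hM
  refine ⟨M, Finset.mem_filter.mpr ⟨hM.1, ?_⟩, hM.2⟩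
  intro B hB hMB
  have hAB : A ⊆ B := hM.2.trans hMB
  have := hMmax B (Finset.mem_filter.mpr ⟨hB, hAB⟩)
  exact (Finset.eq_of_subset_of_card_le hMB this).symm

lemma sup_maxset (F : Finset (Finset γ)) : F.sup id = (MaxSet F).sup id := by
  apply le_antisymm
  · apply Finset.sup_le
    intro A hA
    obtain ⟨M, hM, hAM⟩ := exists_maxset hA
    exact le_trans (Finset.le_iff_subset.mpr hAM) (Finset.le_sup (f := id) hM)
  · exact Finset.sup_mono (Finset.filter_subset _ _)

lemma maxset_disj {F : Finset (Finset γ)}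
    (hlam : ∀ A ∈ F, ∀ B ∈ F, A ⊆ B ∨ B ⊆ A ∨ Disjoint A B)
    {M1 M2 : Finset γ} (h1 : M1 ∈ MaxSet F) (h2 : M2 ∈ MaxSet F) (hne : M1 ≠ M2) :
    Disjoint M1 M2 := by
  rw [MaxSet, Finset.mem_filter] at h1 h2
  rcases hlam M1 h1.1 M2 h2.1 with h | h | h
  · exact absurd (h1.2 M2 h2.1 h) (by intro he; exact hne he.symm)
  · exact absurd (h2.2 M1 h1.1 h) hne
  · exact h

lemma card_sup_maxset (F : Finset (Finset γ))
    (hlam : ∀ A ∈ F, ∀ B ∈ F, A ⊆ B ∨ B ⊆ A ∨ Disjoint A B) :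
    ((MaxSet F).sup id).card = ∑ M ∈ MaxSet F, M.card := by
  rw [Finset.sup_eq_biUnion]
  exact Finset.card_biUnion (fun x hx y hy hne => maxset_disj hlam hx hy hne)

lemma laminar_bound_aux : ∀ (n : ℕ) (F : Finset (Finset γ)), F.card ≤ n →
    (∀ A ∈ F, 2 ≤ A.card) →
    (∀ A ∈ F, ∀ B ∈ F, A ⊆ B ∨ B ⊆ A ∨ Disjoint A B) →
    F.card + (MaxSet F).card ≤ (F.sup id).card := by
  intro n
  induction n with
  | zero =>
    intro F hF _ _
    rw [Finset.card_eq_zero.mp (Nat.le_zero.mp hF)]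
    simp [MaxSet]
  | succ n ih =>
    intro F hF hsize hlam
    classical
    rcases Finset.eq_empty_or_nonempty F with hFe | hFne
    · subst hFe; simp [MaxSet]
    have hch : ∀ A ∈ F, ∃ M, M ∈ MaxSet F ∧ A ⊆ M := fun A hA => exists_maxset hA
    set φ : Finset γ → Finset γ :=
      fun A => if h : ∃ M, M ∈ MaxSet F ∧ A ⊆ M then h.choose else ∅ with hφdef
    have hφ : ∀ A ∈ F, φ A ∈ MaxSet F ∧ A ⊆ φ A := by
      intro A hA
      have h := hch A hA
      simp only [hφdef, dif_pos h]
      exact h.choose_spec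
    set D := F \ MaxSet F with hDdef
    have hMsub : MaxSet F ⊆ F := Finset.filter_subset _ _
    have hcard1 : F.card = (MaxSet F).card + D.card := by
      rw [hDdef, Finset.card_sdiff, Finset.inter_eq_left.mpr hMsub]
      have := Finset.card_le_card hMsub
      omega
    have hfib : D.card = ∑ M ∈ MaxSet F, (D.filter (fun A => φ A = M)).card := by
      apply Finset.card_eq_sum_card_fiberwise
      intro A hA
      exact (hφ A (Finset.mem_sdiff.mp hA).1).1
    have hperM : ∀ M ∈ MaxSet F, (D.filter (fun A => φ A = M)).card + 2 ≤ M.card := by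
      intro M hM
      set G := D.filter (fun A => φ A = M) with hGdef
      have hGF : G ⊆ F := (Finset.filter_subset _ _).trans (Finset.sdiff_subset)
      have hGM : ∀ A ∈ G, A ⊂ M := by
        intro A hA
        rw [hGdef, Finset.mem_filter] at hA
        obtain ⟨hAD, hAφ⟩ := hA
        rw [Finset.mem_sdiff] at hAD
        have hsub : A ⊆ M := hAφ ▸ (hφ A hAD.1).2
        refine Finset.ssubset_iff_subset_ne.mpr ⟨hsub, ?_⟩
        intro he
        exact hAD.2 (he ▸ hM)
      have hMG : M ∉ G := fun h => (hGM M h).ne rfl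
      have hGn : G.card ≤ n := by
        have : G ⊆ F.erase M := by
          intro A hA
          exact Finset.mem_erase.mpr ⟨fun he => hMG (he ▸ hA), hGF hA⟩
        have h1 := Finset.card_le_card this
        have h2 := Finset.card_erase_of_mem (hMsub hM)
        have h3 := Finset.card_pos.mpr ⟨M, hMsub hM⟩
        omega
      have hIH := ih G hGn (fun A hA => hsize A (hGF hA))
        (fun A hA B hB => hlam A (hGF hA) B (hGF hB))
      have hGsup : G.sup id ⊆ M := by
        rw [← Finset.le_iff_subset]
        apply Finset.sup_le
        intro A hA
        exact Finset.le_iff_subset.mpr (hGM A hA).subset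
      have hMcard : 2 ≤ M.card := hsize M (hMsub hM)
      rcases Finset.eq_empty_or_nonempty G with hGe | hGne
      · rw [hGe]; simpa using hMcard
      · have hK1 : 1 ≤ (MaxSet G).card := by
          obtain ⟨A, hA⟩ := hGne
          obtain ⟨M', hM', _⟩ := exists_maxset hA
          exact Finset.card_pos.mpr ⟨M', hM'⟩
        by_cases hK2 : 2 ≤ (MaxSet G).card
        · have := Finset.card_le_card hGsup
          omega
        · have hK : (MaxSet G).card = 1 := by omega
          obtain ⟨M', hMG'⟩ := Finset.card_eq_one.mp hK
          have hsupG : G.sup id = M' := by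
            rw [sup_maxset, hMG', Finset.sup_singleton]
            rfl
          have hM'G : M' ∈ G := by
            have : M' ∈ MaxSet G := by rw [hMG']; exact Finset.mem_singleton_self M'
            exact (Finset.filter_subset _ _) this
          have hlt : M'.card < M.card := Finset.card_lt_card (hGM M' hM'G)
          rw [hsupG] at hIH
          rw [hK] at hIH
          omega
    calc F.card + (MaxSet F).card
        = ∑ M ∈ MaxSet F, ((D.filter (fun A => φ A = M)).card + 2) := by
          rw [Finset.sum_add_distrib, Finset.sum_const, smul_eq_mul]
          omega
      _ ≤ ∑ M ∈ MaxSet F, M.card := Finset.sum_le_sum hperM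
      _ = ((MaxSet F).sup id).card := (card_sup_maxset F hlam).symm
      _ = (F.sup id).card := by rw [← sup_maxset]

/-- A laminar family of sets of size `≥ 2` in a ground set `L` has
fewer than `|L|` members (when nonempty, at most `|L| - 1`). -/
lemma laminar_card_le {F : Finset (Finset γ)} {L : Finset γ}
    (hsize : ∀ A ∈ F, 2 ≤ A.card)
    (hlam : ∀ A ∈ F, ∀ B ∈ F, A ⊆ B ∨ B ⊆ A ∨ Disjoint A B)
    (hL : ∀ A ∈ F, A ⊆ L) (hFne : F.Nonempty) :
    F.card + 1 ≤ L.card := by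
  have h := laminar_bound_aux F.card F le_rfl hsize hlam
  have hsup : F.sup id ⊆ L := Finset.le_iff_subset.mp
    (Finset.sup_le (fun A hA => Finset.le_iff_subset.mpr (hL A hA)))
  have h2 := Finset.card_le_card hsup
  have hK : 1 ≤ (MaxSet F).card := by
    obtain ⟨A, hA⟩ := hFne
    obtain ⟨M, hM, _⟩ := exists_maxset hA
    exact Finset.card_pos.mpr ⟨M, hM⟩
  omega

end Laminar

section Slicing

lemma sum_slices {β : Type*} (I : Finset β) (f : β → ℕ) (D : ℕ)
    (hf : ∀ b ∈ I, f b ≤ D) :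
    ∑ b ∈ I, f b = ∑ d ∈ Finset.Icc 1 D, (I.filter (fun b => d ≤ f b)).card := by
  classical
  have h1 : ∀ b ∈ I, f b = ∑ d ∈ Finset.Icc 1 D, (if d ≤ f b then 1 else 0) := by
    intro b hb
    rw [← Finset.card_filter]
    have : (Finset.Icc 1 D).filter (fun d => d ≤ f b) = Finset.Icc 1 (f b) := by
      ext d
      simp only [Finset.mem_filter, Finset.mem_Icc]
      have := hf b hb
      omega
    rw [this, Nat.card_Icc]; omega
  rw [Finset.sum_congr rfl h1, Finset.sum_comm]
  apply Finset.sum_congr rfl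
  intro d _
  rw [Finset.card_filter]

end Slicing

section SpeciesCount

variable {T : RTree V}

/-- A leaf has no proper descendants. -/
lemma anc_leaf_eq {x s : V} (hx : IsLeaf T x) (h : Anc T x s) : s = x := by
  by_contra hne
  obtain ⟨c, hc, _⟩ := child_step h (fun he => hne he.symm)
  exact hx c hc

lemma children_eq_of_common_desc {c1 c2 v x : V} (h1 : IsChild T c1 v) (h2 : IsChild T c2 v)
    (ha1 : Anc T c1 x) (ha2 : Anc T c2 x) : c1 = c2 :=
  anc_eq_of_dep_eq ha1 ha2 (by rw [h1.dep_eq, h2.dep_eq])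

variable {VS : Type*} [Fintype VS] {S : RTree VS}

/-- Leaves below `x`. -/
noncomputable def LfS (S : RTree VS) (x : VS) : Finset VS :=
  Finset.univ.filter (fun s => IsLeaf S s ∧ Anc S x s)

/-- Internal nodes below `x`. -/
noncomputable def InS (S : RTree VS) (x : VS) : Finset VS :=
  Finset.univ.filter (fun s => ¬ IsLeaf S s ∧ Anc S x s)

lemma exists_two_children {v : VS} (hS : IsSpeciesTree S) (hv : ¬ IsLeaf S v) :
    ∃ c1 c2, IsChild S c1 v ∧ IsChild S c2 v ∧ c1 ≠ c2 ∧
      ∀ c, IsChild S c v → c = c1 ∨ c = c2 := by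
  obtain ⟨c1, c2, hne, hset⟩ := Set.ncard_eq_two.mp (hS v hv)
  have h1 : c1 ∈ childSet S v := by rw [hset]; exact Set.mem_insert _ _
  have h2 : c2 ∈ childSet S v := by rw [hset]; exact Set.mem_insert_iff.mpr (Or.inr rfl)
  refine ⟨c1, c2, h1, h2, hne, ?_⟩
  intro c hc
  have : c ∈ childSet S v := hc
  rw [hset] at this
  simpa using this

lemma not_anc_child_parent {c v : VS} (hc : IsChild S c v) : ¬ Anc S c v := by
  intro h
  have := anc_dep_le h
  rw [hc.dep_eq] at this
  omega

lemma leaf_le_internal_aux (hS : IsSpeciesTree S) :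
    ∀ (n : ℕ) (x : VS), (Finset.univ.filter (fun y => Anc S x y)).card ≤ n →
      (LfS S x).card ≤ (InS S x).card + 1 := by
  intro n
  induction n with
  | zero =>
    intro x hx
    exfalso
    have : x ∈ Finset.univ.filter (fun y => Anc S x y) := by simp [anc_refl]
    have := Finset.card_pos.mpr ⟨x, this⟩
    omega
  | succ n ih =>
    intro x hx
    by_cases hleaf : IsLeaf S x
    · have : LfS S x = {x} := by
        ext s
        simp only [LfS, Finset.mem_filter, Finset.mem_univ, true_and, Finset.mem_singleton]
        constructor
        · rintro ⟨_, hanc⟩; exact anc_leaf_eq hleaf hanc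
        · rintro rfl; exact ⟨hleaf, anc_refl _⟩
      rw [this]; simp
    · obtain ⟨c1, c2, hc1, hc2, hne, hall⟩ := exists_two_children hS hleaf
      have hdesc : ∀ c, IsChild S c x →
          (Finset.univ.filter (fun y => Anc S c y)).card ≤ n := by
        intro c hc
        have hsub : Finset.univ.filter (fun y => Anc S c y) ⊆
            (Finset.univ.filter (fun y => Anc S x y)).erase x := by
          intro y hy
          rw [Finset.mem_filter] at hy
          refine Finset.mem_erase.mpr ⟨?_, by simp [anc_trans hc.2 hy.2]⟩
          rintro rfl
          exact not_anc_child_parent hc hy.2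
        have h1 := Finset.card_le_card hsub
        have h2 : x ∈ Finset.univ.filter (fun y => Anc S x y) := by simp [anc_refl]
        have h3 := Finset.card_erase_of_mem h2
        have h4 := Finset.card_pos.mpr ⟨x, h2⟩
        omega
      have hLf : LfS S x = LfS S c1 ∪ LfS S c2 := by
        ext s
        simp only [LfS, Finset.mem_union, Finset.mem_filter, Finset.mem_univ, true_and]
        constructor
        · rintro ⟨hsl, hanc⟩
          have hsx : x ≠ s := by rintro rfl; exact hleaf.elim (fun c hc => hsl c hc)
          obtain ⟨c, hc, hcs⟩ := child_step hanc hsx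
          rcases hall c hc with rfl | rfl
          · exact Or.inl ⟨hsl, hcs⟩
          · exact Or.inr ⟨hsl, hcs⟩
        · rintro (⟨hsl, hanc⟩ | ⟨hsl, hanc⟩)
          · exact ⟨hsl, anc_trans hc1.2 hanc⟩
          · exact ⟨hsl, anc_trans hc2.2 hanc⟩
      have hLdisj : Disjoint (LfS S c1) (LfS S c2) := by
        rw [Finset.disjoint_left]
        intro s hs1 hs2
        rw [LfS, Finset.mem_filter] at hs1 hs2
        exact hne (children_eq_of_common_desc hc1 hc2 hs1.2.2 hs2.2.2)
      have hIn : InS S x = insert x (InS S c1 ∪ InS S c2) := by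
        ext s
        simp only [InS, Finset.mem_insert, Finset.mem_union, Finset.mem_filter,
          Finset.mem_univ, true_and]
        constructor
        · rintro ⟨hsl, hanc⟩
          by_cases hsx : x = s
          · exact Or.inl hsx.symm
          obtain ⟨c, hc, hcs⟩ := child_step hanc hsx
          rcases hall c hc with rfl | rfl
          · exact Or.inr (Or.inl ⟨hsl, hcs⟩)
          · exact Or.inr (Or.inr ⟨hsl, hcs⟩)
        · rintro (rfl | ⟨hsl, hanc⟩ | ⟨hsl, hanc⟩)
          · exact ⟨hleaf, anc_refl _⟩
          · exact ⟨hsl, anc_trans hc1.2 hanc⟩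
          · exact ⟨hsl, anc_trans hc2.2 hanc⟩
      have hIdisj : Disjoint (InS S c1) (InS S c2) := by
        rw [Finset.disjoint_left]
        intro s hs1 hs2
        rw [InS, Finset.mem_filter] at hs1 hs2
        exact hne (children_eq_of_common_desc hc1 hc2 hs1.2.2 hs2.2.2)
      have hxnot : x ∉ InS S c1 ∪ InS S c2 := by
        rw [Finset.mem_union, InS, InS, Finset.mem_filter, Finset.mem_filter]
        rintro (⟨_, _, h⟩ | ⟨_, _, h⟩)
        · exact not_anc_child_parent hc1 h
        · exact not_anc_child_parent hc2 h
      have e1 : (LfS S x).card = (LfS S c1).card + (LfS S c2).card := by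
        rw [hLf, Finset.card_union_of_disjoint hLdisj]
      have e2 : (InS S x).card = (InS S c1).card + (InS S c2).card + 1 := by
        rw [hIn, Finset.card_insert_of_notMem hxnot,
          Finset.card_union_of_disjoint hIdisj]
      have i1 := ih c1 (hdesc c1 hc1)
      have i2 := ih c2 (hdesc c2 hc2)
      omega

lemma leaf_le_internal (hS : IsSpeciesTree S) (x : VS) :
    (LfS S x).card ≤ (InS S x).card + 1 :=
  leaf_le_internal_aux hS _ x le_rfl

end SpeciesCount

section CountMain

variable {VS : Type*} [Fintype VS] {S : RTree VS}

lemma Hsum_eq : Hsum S = ∑ s ∈ Finset.univ.filter (fun s => ¬ IsLeaf S s), dep S s := by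
  rw [Finset.sum_filter, Hsum]
  apply Finset.sum_congr rfl
  intro s _
  by_cases h : IsLeaf S s <;> simp [h, dep]

lemma count_lemma {β Γ : Type*} [Fintype β] [Fintype Γ]
    (hS : IsSpeciesTree S)
    (I : Finset β) (A : β → Finset Γ) (w : β → VS) (gs : Γ → VS)
    (hgs : ∀ g, IsLeaf S (gs g)) (hgsinj : Function.Injective gs)
    (hA2 : ∀ v ∈ I, 2 ≤ (A v).card)
    (hlam : ∀ v ∈ I, ∀ u ∈ I, A v ⊆ A u ∨ A u ⊆ A v ∨ Disjoint (A v) (A u))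
    (hinj : ∀ v ∈ I, ∀ u ∈ I, A v = A u → v = u)
    (hanc : ∀ v ∈ I, ∀ g ∈ A v, Anc S (w v) (gs g)) :
    ∑ v ∈ I, dep S (w v) ≤ Hsum S := by
  classical
  set D := Finset.univ.sup (dep S) with hD
  have hbound : ∀ v ∈ I, dep S (w v) ≤ D := fun v _ => Finset.le_sup (Finset.mem_univ _)
  have hboundS : ∀ s ∈ Finset.univ.filter (fun s => ¬ IsLeaf S s), dep S s ≤ D :=
    fun s _ => Finset.le_sup (Finset.mem_univ _)
  rw [sum_slices I _ D hbound, Hsum_eq, sum_slices _ _ D hboundS]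
  apply Finset.sum_le_sum
  intro d _
  -- the depth-d ancestor map
  have hξex : ∀ s : VS, d ≤ dep S s → ∃ x, Anc S x s ∧ dep S x = d :=
    fun s h => exists_anc_at_dep h
  set ξ : VS → VS := fun s => if h : d ≤ dep S s then (hξex s h).choose else S.root with hξdef
  have hξ1 : ∀ s, (h : d ≤ dep S s) → Anc S (ξ s) s ∧ dep S (ξ s) = d := by
    intro s h
    simp only [hξdef, dif_pos h]
    exact (hξex s h).choose_spec
  set Xd := Finset.univ.filter (fun x : VS => dep S x = d) with hXd
  set If := I.filter (fun v => d ≤ dep S (w v)) with hIf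
  set Sf := (Finset.univ.filter (fun s => ¬ IsLeaf S s)).filter (fun s => d ≤ dep S s) with hSf
  have hGfib : If.card = ∑ x ∈ Xd, (If.filter (fun v => ξ (w v) = x)).card := by
    apply Finset.card_eq_sum_card_fiberwise
    intro v hv
    rw [hIf, Finset.mem_coe, Finset.mem_filter] at hv
    rw [hXd, Finset.mem_coe, Finset.mem_filter]
    exact ⟨Finset.mem_univ _, (hξ1 _ hv.2).2⟩
  have hSfib : Sf.card = ∑ x ∈ Xd, (Sf.filter (fun s => ξ s = x)).card := by
    apply Finset.card_eq_sum_card_fiberwise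
    intro s hs
    rw [hSf, Finset.mem_coe, Finset.mem_filter] at hs
    rw [hXd, Finset.mem_coe, Finset.mem_filter]
    exact ⟨Finset.mem_univ _, (hξ1 _ hs.2).2⟩
  rw [hGfib, hSfib]
  apply Finset.sum_le_sum
  intro x hx
  rw [hXd, Finset.mem_filter] at hx
  -- the species-side fiber is exactly the set of internal nodes below x
  have hSeq : Sf.filter (fun s => ξ s = x) = InS S x := by
    ext s
    simp only [hSf, InS, Finset.mem_filter, Finset.mem_univ, true_and]
    constructor
    · rintro ⟨⟨hnl, hds⟩, hxs⟩
      exact ⟨hnl, hxs ▸ (hξ1 s hds).1⟩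
    · rintro ⟨hnl, hanc'⟩
      have hds : d ≤ dep S s := by
        have := anc_dep_le hanc'
        omega
      refine ⟨⟨hnl, hds⟩, ?_⟩
      exact anc_eq_of_dep_eq (hξ1 s hds).1 hanc' (by rw [(hξ1 s hds).2, hx.2])
  rw [hSeq]
  -- the gene-side fiber
  set fib := If.filter (fun v => ξ (w v) = x) with hfib
  rcases Finset.eq_empty_or_nonempty fib with hfe | hfne
  · rw [hfe]; simp
  have hfibI : fib ⊆ I := by
    intro v hv
    rw [hfib, Finset.mem_filter, hIf, Finset.mem_filter] at hv
    exact hv.1.1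
  set F := fib.image A with hF
  have hFcard : F.card = fib.card := by
    apply Finset.card_image_of_injOn
    intro u hu v hv he
    exact hinj u (hfibI hu) v (hfibI hv) he
  set L := Finset.univ.filter (fun g : Γ => Anc S x (gs g)) with hL
  have hmemF : ∀ B ∈ F, ∃ v ∈ fib, A v = B := by
    intro B hB
    rw [hF, Finset.mem_image] at hB
    obtain ⟨v, hv, he⟩ := hB
    exact ⟨v, hv, he⟩
  have hsub : ∀ v ∈ fib, A v ⊆ L := by
    intro v hv g hg
    rw [hL, Finset.mem_filter]
    have hvI := hfibI hv
    rw [hfib, Finset.mem_filter, hIf, Finset.mem_filter] at hv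
    have hxw : Anc S x (w v) := hv.2 ▸ (hξ1 _ hv.1.2).1
    exact ⟨Finset.mem_univ _, anc_trans hxw (hanc v hvI g hg)⟩
  have hlc := laminar_card_le (F := F) (L := L)
    (fun B hB => by obtain ⟨v, hv, he⟩ := hmemF B hB; exact he ▸ hA2 v (hfibI hv))
    (fun B hB B' hB' => by
      obtain ⟨v, hv, he⟩ := hmemF B hB
      obtain ⟨v', hv', he'⟩ := hmemF B' hB'
      exact he ▸ he' ▸ hlam v (hfibI hv) v' (hfibI hv'))
    (fun B hB => by obtain ⟨v, hv, he⟩ := hmemF B hB; exact he ▸ hsub v hv)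
    (hfne.image A)
  have hLcard : L.card ≤ (LfS S x).card := by
    apply Finset.card_le_card_of_injOn gs
    · intro g hg
      rw [hL, Finset.mem_coe, Finset.mem_filter] at hg
      rw [Finset.mem_coe, LfS, Finset.mem_filter]
      exact ⟨Finset.mem_univ _, hgs g, hg.2⟩
    · intro a _ b _ he
      exact hgsinj he
  have hLI := leaf_le_internal hS x
  omega

end CountMain

/-- A reconciled gene tree with species tree `S`, whose leaves are labeled bijectively by
the set of genes `Γ`. -/
structure Recon (Γ : Type*) (VG : Type*) (VS : Type*) [Fintype VG] [Fintype VS]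
    (S : RTree VS) where
  tree : RTree VG
  geneLeaf : Γ → VG
  geneLeaf_inj : Function.Injective geneLeaf
  geneLeaf_range : ∀ v, IsLeaf tree v ↔ ∃ g, geneLeaf g = v
  μ : VG → VS
  lbl : VG → Evt
  internal_children : ∀ v, ¬ IsLeaf tree v → 2 ≤ (childSet tree v).ncard
  leaf_species : ∀ v, IsLeaf tree v → IsLeaf S (μ v)
  leaf_lbl : ∀ v, IsLeaf tree v → lbl v = Evt.extant
  internal_lbl : ∀ v, ¬ IsLeaf tree v → lbl v = Evt.dup ∨ lbl v = Evt.spec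
  time_consistent : ∀ a b, Anc tree a b → Anc S (μ a) (μ b)
  spec_two_children : ∀ v, lbl v = Evt.spec →
    ¬ IsLeaf S (μ v) ∧ (childSet tree v).ncard = 2
  spec_separates : ∀ v, lbl v = Evt.spec →
    ∀ v₁ v₂, IsChild tree v₁ v → IsChild tree v₂ v → v₁ ≠ v₂ →
      ∃ s₁ s₂, IsChild S s₁ (μ v) ∧ IsChild S s₂ (μ v) ∧ s₁ ≠ s₂ ∧
        ((Anc S s₁ (μ v₁) ∧ Anc S s₂ (μ v₂)) ∨ (Anc S s₂ (μ v₁) ∧ Anc S s₁ (μ v₂)))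

variable {Γ : Type*} {VS VG₁ VG₂ : Type*} [Fintype VS] [Fintype VG₁] [Fintype VG₂]
  {S : RTree VS}

/-- The clade of a gene tree node, as a set of genes. -/
def gclade (𝒢 : Recon Γ VG₁ VS S) (v : VG₁) : Set Γ :=
  {g | Anc 𝒢.tree v (𝒢.geneLeaf g)}

/-- Two reconciled gene trees (over the same species tree and gene set) are comparable if
corresponding extant genes map to the same species. -/
def Comparable (𝒢₁ : Recon Γ VG₁ VS S) (𝒢₂ : Recon Γ VG₂ VS S) : Prop :=
  ∀ g, 𝒢₁.μ (𝒢₁.geneLeaf g) = 𝒢₂.μ (𝒢₂.geneLeaf g)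

/-- `m` is the correspondence map `v ↦ lca_{G₂}(L(G₁(v)))`. -/
def IsLcaMap (𝒢₁ : Recon Γ VG₁ VS S) (𝒢₂ : Recon Γ VG₂ VS S) (m : VG₁ → VG₂) : Prop :=
  ∀ v, IsLCA 𝒢₂.tree (𝒢₂.geneLeaf '' gclade 𝒢₁ v) (m v)

/-- `μ` is the lca-mapping: every node maps to the lca of the species of its leaf descendants. -/
def UsesLcaMapping (𝒢 : Recon Γ VG₁ VS S) : Prop :=
  ∀ v, IsLCA S (𝒢.μ '' clade 𝒢.tree v) (𝒢.μ v)

/-- The path component `d_path(𝒢₁,𝒢₂)` (with `m` the lca correspondence map). -/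
noncomputable def dPath (𝒢₁ : Recon Γ VG₁ VS S) (𝒢₂ : Recon Γ VG₂ VS S)
    (m : VG₁ → VG₂) : ℕ :=
  ∑ v : VG₁, S.adj.dist (𝒢₁.μ v) (𝒢₂.μ (m v))

/-- The label component `d_lbl(𝒢₁,𝒢₂)`. -/
noncomputable def dLbl (𝒢₁ : Recon Γ VG₁ VS S) (𝒢₂ : Recon Γ VG₂ VS S)
    (m : VG₁ → VG₂) : ℕ :=
  {v : VG₁ | 𝒢₁.lbl v ≠ 𝒢₂.lbl (m v)}.ncard

/-- The asymmetric dissimilarity `d_asym = α·d_path + (1−α)·d_lbl`. -/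
noncomputable def dAsym (α : ℝ) (𝒢₁ : Recon Γ VG₁ VS S) (𝒢₂ : Recon Γ VG₂ VS S)
    (m : VG₁ → VG₂) : ℝ :=
  α * (dPath 𝒢₁ 𝒢₂ m : ℝ) + (1 - α) * (dLbl 𝒢₁ 𝒢₂ m : ℝ)

/-- The Path-Label Reconciliation dissimilarity `PLR(𝒢₁,𝒢₂)`, where `m₁₂`, `m₂₁` are the
lca correspondence maps in the two directions. -/
noncomputable def PLR (α : ℝ) (𝒢₁ : Recon Γ VG₁ VS S) (𝒢₂ : Recon Γ VG₂ VS S)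
    (m₁₂ : VG₁ → VG₂) (m₂₁ : VG₂ → VG₁) : ℝ :=
  dAsym α 𝒢₁ 𝒢₂ m₁₂ + dAsym α 𝒢₂ 𝒢₁ m₂₁

/-- An edge `uv` (with `u` the parent of `v`) is redundant if both endpoints are duplications
mapped to the same species. -/
def RedundantEdge (𝒢 : Recon Γ VG₁ VS S) (u v : VG₁) : Prop :=
  IsChild 𝒢.tree v u ∧ 𝒢.μ u = 𝒢.μ v ∧ 𝒢.lbl u = Evt.dup ∧ 𝒢.lbl v = Evt.dup

/-- A reconciled gene tree is least duplication-resolved if it has no redundant edge. -/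
def LeastDupResolved (𝒢 : Recon Γ VG₁ VS S) : Prop :=
  ∀ u v, ¬ RedundantEdge 𝒢 u v

/-- `𝒢'` is obtained from `𝒢` by contracting the edge `uv` (`u` the parent of `v`), i.e.
deleting `v` and attaching its children to `u`; `φ` is the corresponding quotient map. -/
def IsContractionOf (𝒢 : Recon Γ VG₁ VS S) (u v : VG₁) (𝒢' : Recon Γ VG₂ VS S)
    (φ : VG₁ → VG₂) : Prop :=
  Function.Surjective φ ∧
  φ u = φ v ∧
  (∀ a b, φ a = φ b → a = b ∨ (a = u ∧ b = v) ∨ (a = v ∧ b = u)) ∧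
  (∀ x y, 𝒢'.tree.adj.Adj x y ↔
    ∃ a b, φ a = x ∧ φ b = y ∧ 𝒢.tree.adj.Adj a b ∧ ¬(a = u ∧ b = v) ∧ ¬(a = v ∧ b = u)) ∧
  𝒢'.tree.root = φ 𝒢.tree.root ∧
  (∀ g, 𝒢'.geneLeaf g = φ (𝒢.geneLeaf g)) ∧
  (∀ a, 𝒢'.μ (φ a) = 𝒢.μ a) ∧
  (∀ a, 𝒢'.lbl (φ a) = 𝒢.lbl a)

/-- Symmetrized redundancy relation on nodes. -/
def RedundantAdj (𝒢 : Recon Γ VG₁ VS S) (a b : VG₁) : Prop :=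
  RedundantEdge 𝒢 a b ∨ RedundantEdge 𝒢 b a

/-- `𝒢'` is the least duplication-resolved tree `LR(𝒢)` obtained by contracting every
redundant edge of `𝒢`; `φ` is the corresponding quotient map. -/
def IsLROf (𝒢 : Recon Γ VG₁ VS S) (𝒢' : Recon Γ VG₂ VS S) (φ : VG₁ → VG₂) : Prop :=
  Function.Surjective φ ∧
  (∀ a b, φ a = φ b ↔ Relation.EqvGen (RedundantAdj 𝒢) a b) ∧
  (∀ x y, 𝒢'.tree.adj.Adj x y ↔
    ∃ a b, φ a = x ∧ φ b = y ∧ 𝒢.tree.adj.Adj a b ∧ ¬ RedundantAdj 𝒢 a b) ∧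
  𝒢'.tree.root = φ 𝒢.tree.root ∧
  (∀ g, 𝒢'.geneLeaf g = φ (𝒢.geneLeaf g)) ∧
  (∀ a, 𝒢'.μ (φ a) = 𝒢.μ a) ∧
  (∀ a, 𝒢'.lbl (φ a) = 𝒢.lbl a)

/-- Isomorphism of reconciled gene trees: a leaf-fixing bijection preserving edges,
species maps and event labels. -/
def ReconIso (𝒢₁ : Recon Γ VG₁ VS S) (𝒢₂ : Recon Γ VG₂ VS S) : Prop :=
  ∃ φ : VG₁ ≃ VG₂,
    (∀ g, φ (𝒢₁.geneLeaf g) = 𝒢₂.geneLeaf g) ∧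
    (∀ a b, 𝒢₂.tree.adj.Adj (φ a) (φ b) ↔ 𝒢₁.tree.adj.Adj a b) ∧
    (∀ v, 𝒢₂.μ (φ v) = 𝒢₁.μ v) ∧
    (∀ v, 𝒢₂.lbl (φ v) = 𝒢₁.lbl v)

/-- Exactly one gene per species: the gene set is the set of species leaves, and each gene
resides in its own species. -/
def OneGenePerSpecies (𝒢 : Recon {s : VS // IsLeaf S s} VG₁ VS S) : Prop :=
  ∀ g, 𝒢.μ (𝒢.geneLeaf g) = g.1


section GeneSide

variable {Γ' : Type*} {VS' VG : Type*} [Fintype VS'] [Fintype VG] [Fintype Γ']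
  {S' : RTree VS'} (𝒢 : Recon Γ' VG VS' S')

/-- The clade of `v` as a finite set of genes. -/
noncomputable def Afam (v : VG) : Finset Γ' :=
  Finset.univ.filter (fun g => Anc 𝒢.tree v (𝒢.geneLeaf g))

lemma mem_Afam {v : VG} {g : Γ'} : g ∈ Afam 𝒢 v ↔ Anc 𝒢.tree v (𝒢.geneLeaf g) := by
  simp [Afam]

lemma exists_gene_desc (v : VG) : ∃ g, Anc 𝒢.tree v (𝒢.geneLeaf g) := by
  obtain ⟨x, hx, hvx⟩ := exists_leaf_desc (T := 𝒢.tree) v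
  obtain ⟨g, hg⟩ := (𝒢.geneLeaf_range x).mp hx
  exact ⟨g, hg ▸ hvx⟩

lemma recon_two_children {v : VG} (hv : ¬ IsLeaf 𝒢.tree v) :
    ∃ c1 c2, IsChild 𝒢.tree c1 v ∧ IsChild 𝒢.tree c2 v ∧ c1 ≠ c2 := by
  have h := 𝒢.internal_children v hv
  have h2 : 1 < (childSet 𝒢.tree v).ncard := by omega
  rw [Set.one_lt_ncard_iff (Set.toFinite _)] at h2
  obtain ⟨a, b, ha, hb, hab⟩ := h2
  exact ⟨a, b, ha, hb, hab⟩

lemma Afam_two {v : VG} (hv : ¬ IsLeaf 𝒢.tree v) : 2 ≤ (Afam 𝒢 v).card := by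
  obtain ⟨c1, c2, hc1, hc2, hne⟩ := recon_two_children 𝒢 hv
  obtain ⟨g1, hg1⟩ := exists_gene_desc 𝒢 c1
  obtain ⟨g2, hg2⟩ := exists_gene_desc 𝒢 c2
  have hgne : g1 ≠ g2 := by
    rintro rfl
    exact hne (children_eq_of_common_desc hc1 hc2 hg1 hg2)
  rw [show (2:ℕ) = 1 + 1 from rfl, Nat.add_one_le_iff, Finset.one_lt_card]
  refine ⟨g1, (mem_Afam 𝒢).mpr (anc_trans hc1.2 hg1),
    g2, (mem_Afam 𝒢).mpr (anc_trans hc2.2 hg2), hgne⟩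

lemma Afam_mem_of_anc {u v : VG} (h : Anc 𝒢.tree u v) {g : Γ'}
    (hg : g ∈ Afam 𝒢 v) : g ∈ Afam 𝒢 u :=
  (mem_Afam 𝒢).mpr (anc_trans h ((mem_Afam 𝒢).mp hg))

lemma Afam_lam (u v : VG) :
    Afam 𝒢 u ⊆ Afam 𝒢 v ∨ Afam 𝒢 v ⊆ Afam 𝒢 u ∨ Disjoint (Afam 𝒢 u) (Afam 𝒢 v) := by
  classical
  by_cases hd : Disjoint (Afam 𝒢 u) (Afam 𝒢 v)
  · exact Or.inr (Or.inr hd)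
  obtain ⟨g, hgu, hgv⟩ := Finset.not_disjoint_iff.mp hd
  rw [mem_Afam] at hgu hgv
  rcases le_total (dep 𝒢.tree u) (dep 𝒢.tree v) with hle | hle
  · have huv : Anc 𝒢.tree u v := anc_of_anc_anc hgu hgv hle
    exact Or.inr (Or.inl (fun g hg => Afam_mem_of_anc 𝒢 huv hg))
  · have hvu : Anc 𝒢.tree v u := anc_of_anc_anc hgv hgu hle
    exact Or.inl (fun g hg => Afam_mem_of_anc 𝒢 hvu hg)

lemma Afam_strict_anc {u v : VG} (huv : Anc 𝒢.tree u v) (hne : u ≠ v)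
    (hu : ¬ IsLeaf 𝒢.tree u) (hsub : Afam 𝒢 u ⊆ Afam 𝒢 v) : False := by
  obtain ⟨c, hc, hcv⟩ := child_step huv hne
  obtain ⟨c1, c2, hc1, hc2, hne12⟩ := recon_two_children 𝒢 hu
  -- one of c1, c2 differs from c
  have : ∃ c', IsChild 𝒢.tree c' u ∧ c' ≠ c := by
    by_cases h1 : c1 = c
    · exact ⟨c2, hc2, fun h => hne12 (h1 ▸ h ▸ rfl)⟩
    · exact ⟨c1, hc1, h1⟩
  obtain ⟨c', hc', hnec⟩ := this
  obtain ⟨g', hg'⟩ := exists_gene_desc 𝒢 c'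
  have hgu : g' ∈ Afam 𝒢 u := (mem_Afam 𝒢).mpr (anc_trans hc'.2 hg')
  have hgv : g' ∈ Afam 𝒢 v := hsub hgu
  have hgc : Anc 𝒢.tree c (𝒢.geneLeaf g') := anc_trans hcv ((mem_Afam 𝒢).mp hgv)
  exact hnec (children_eq_of_common_desc hc' hc hg' hgc)

lemma Afam_inj {u v : VG} (hu : ¬ IsLeaf 𝒢.tree u) (hv : ¬ IsLeaf 𝒢.tree v)
    (he : Afam 𝒢 u = Afam 𝒢 v) : u = v := by
  by_contra hne
  have hnonempty : (Afam 𝒢 u).Nonempty := by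
    have := Afam_two 𝒢 hu; exact Finset.card_pos.mp (by omega)
  obtain ⟨g, hg⟩ := hnonempty
  have hgv : g ∈ Afam 𝒢 v := he ▸ hg
  rw [mem_Afam] at hg hgv
  rcases le_total (dep 𝒢.tree u) (dep 𝒢.tree v) with hle | hle
  · exact Afam_strict_anc 𝒢 (anc_of_anc_anc hg hgv hle) hne hu he.le
  · exact Afam_strict_anc 𝒢 (anc_of_anc_anc hgv hg hle) (fun h => hne h.symm) hv he.ge

lemma gclade_leaf (g : Γ') : gclade 𝒢 (𝒢.geneLeaf g) = {g} := by
  ext g'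
  simp only [gclade, Set.mem_setOf_eq, Set.mem_singleton_iff]
  constructor
  · intro h
    have hleaf : IsLeaf 𝒢.tree (𝒢.geneLeaf g) := (𝒢.geneLeaf_range _).mpr ⟨g, rfl⟩
    exact 𝒢.geneLeaf_inj (anc_leaf_eq hleaf h)
  · rintro rfl; exact anc_refl _

end GeneSide

/-- `d_path(𝒢₁,𝒢₂) ≤ H(S)` for gene trees with exactly one gene per species. -/
theorem stmt8 (hS : IsSpeciesTree S) (hn : 1 ≤ numLeaves S)
    (𝒢₁ : Recon {s : VS // IsLeaf S s} VG₁ VS S)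
    (𝒢₂ : Recon {s : VS // IsLeaf S s} VG₂ VS S)
    (h₁ : OneGenePerSpecies 𝒢₁) (h₂ : OneGenePerSpecies 𝒢₂)
    (m : VG₁ → VG₂) (hm : IsLcaMap 𝒢₁ 𝒢₂ m) :
    dPath 𝒢₁ 𝒢₂ m ≤ Hsum S := by
  classical
  haveI : Fintype {s : VS // IsLeaf S s} := Subtype.fintype _
  -- leaf terms vanish
  have hleafzero : ∀ v, IsLeaf 𝒢₁.tree v → S.adj.dist (𝒢₁.μ v) (𝒢₂.μ (m v)) = 0 := by
    intro v hv
    obtain ⟨g, hg⟩ := (𝒢₁.geneLeaf_range v).mp hv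
    have hμ1 : 𝒢₁.μ v = g.1 := by rw [← hg]; exact h₁ g
    have hgc : gclade 𝒢₁ v = {g} := by rw [← hg]; exact gclade_leaf 𝒢₁ g
    have himg : 𝒢₂.geneLeaf '' gclade 𝒢₁ v = {𝒢₂.geneLeaf g} := by
      rw [hgc, Set.image_singleton]
    have hlca := hm v
    rw [himg] at hlca
    have ha1 : Anc 𝒢₂.tree (m v) (𝒢₂.geneLeaf g) := hlca.1 _ rfl
    have ha2 : Anc 𝒢₂.tree (𝒢₂.geneLeaf g) (m v) := hlca.2 _ (by
      intro x hx
      rw [Set.mem_singleton_iff] at hx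
      subst hx
      exact anc_refl _)
    have hmeq : m v = 𝒢₂.geneLeaf g := anc_antisymm ha1 ha2
    rw [hμ1, hmeq, h₂ g, SimpleGraph.dist_self]
  -- internal terms are bounded by the depth of a witness
  have hterm : ∀ v, ¬ IsLeaf 𝒢₁.tree v → ∃ wv,
      S.adj.dist (𝒢₁.μ v) (𝒢₂.μ (m v)) ≤ dep S wv ∧ ∀ g ∈ Afam 𝒢₁ v, Anc S wv g.1 := by
    intro v hv
    have hanca : ∀ g ∈ Afam 𝒢₁ v, Anc S (𝒢₁.μ v) g.1 := by
      intro g hg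
      have := 𝒢₁.time_consistent v (𝒢₁.geneLeaf g) ((mem_Afam 𝒢₁).mp hg)
      rwa [h₁ g] at this
    have hancb : ∀ g ∈ Afam 𝒢₁ v, Anc S (𝒢₂.μ (m v)) g.1 := by
      intro g hg
      have hmem : 𝒢₂.geneLeaf g ∈ 𝒢₂.geneLeaf '' gclade 𝒢₁ v :=
        ⟨g, (mem_Afam 𝒢₁).mp hg, rfl⟩
      have := 𝒢₂.time_consistent (m v) (𝒢₂.geneLeaf g) ((hm v).1 _ hmem)
      rwa [h₂ g] at this
    obtain ⟨g0, hg0⟩ : (Afam 𝒢₁ v).Nonempty :=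
      Finset.card_pos.mp (by have := Afam_two 𝒢₁ hv; omega)
    rcases le_total (dep S (𝒢₁.μ v)) (dep S (𝒢₂.μ (m v))) with hle | hle
    · have hab : Anc S (𝒢₁.μ v) (𝒢₂.μ (m v)) :=
        anc_of_anc_anc (hanca g0 hg0) (hancb g0 hg0) hle
      refine ⟨𝒢₂.μ (m v), ?_, hancb⟩
      rw [anc_iff] at hab
      omega
    · have hab : Anc S (𝒢₂.μ (m v)) (𝒢₁.μ v) :=
        anc_of_anc_anc (hancb g0 hg0) (hanca g0 hg0) hle
      refine ⟨𝒢₁.μ v, ?_, hanca⟩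
      rw [anc_iff] at hab
      have hcomm : S.adj.dist (𝒢₁.μ v) (𝒢₂.μ (m v)) = S.adj.dist (𝒢₂.μ (m v)) (𝒢₁.μ v) :=
        SimpleGraph.dist_comm
      omega
  have hch : ∀ v, ∃ wv, ¬ IsLeaf 𝒢₁.tree v →
      (S.adj.dist (𝒢₁.μ v) (𝒢₂.μ (m v)) ≤ dep S wv ∧ ∀ g ∈ Afam 𝒢₁ v, Anc S wv g.1) := by
    intro v
    by_cases hv : IsLeaf 𝒢₁.tree v
    · exact ⟨S.root, fun h => absurd hv h⟩
    · obtain ⟨wv, hw1, hw2⟩ := hterm v hv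
      exact ⟨wv, fun _ => ⟨hw1, hw2⟩⟩
  choose w hw using hch
  rw [dPath, ← Finset.sum_filter_add_sum_filter_not Finset.univ (fun v => IsLeaf 𝒢₁.tree v)]
  have hz : ∑ v ∈ Finset.univ.filter (fun v => IsLeaf 𝒢₁.tree v),
      S.adj.dist (𝒢₁.μ v) (𝒢₂.μ (m v)) = 0 :=
    Finset.sum_eq_zero (fun v hv => hleafzero v (Finset.mem_filter.mp hv).2)
  rw [hz, zero_add]
  calc ∑ v ∈ Finset.univ.filter (fun v => ¬ IsLeaf 𝒢₁.tree v),
        S.adj.dist (𝒢₁.μ v) (𝒢₂.μ (m v))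
      ≤ ∑ v ∈ Finset.univ.filter (fun v => ¬ IsLeaf 𝒢₁.tree v), dep S (w v) :=
        Finset.sum_le_sum (fun v hv => (hw v (Finset.mem_filter.mp hv).2).1)
    _ ≤ Hsum S := by
        apply count_lemma hS _ (Afam 𝒢₁) w Subtype.val (fun g => g.2) Subtype.val_injective
        · intro v hv
          exact Afam_two 𝒢₁ (Finset.mem_filter.mp hv).2
        · intro v _ u _
          exact Afam_lam 𝒢₁ v u
        · intro v hv u hu he
          exact Afam_inj 𝒢₁ (Finset.mem_filter.mp hv).2 (Finset.mem_filter.mp hu).2 he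
        · intro v hv
          exact (hw v (Finset.mem_filter.mp hv).2).2
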